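/- Let 𝒞 be a convex geometry on a finite set W with ∅ ∈ 𝒞. Then there is a finite set U ⊆ ℝ² and a surjective map r : U → W such that (i) for every C ⊆ U convex in the relative convexity of U in ℝ², the set r_∀(C) = {w ∈ W : r⁻¹({w}) ⊆ C} belongs to 𝒞, and (ii) every D ∈ 𝒞 equals r_∀(C) for some relatively convex C ⊆ U. In other words, (W, 𝒞) is the strong-morphism image of a finite planar point configuration. -/

import Mathlib

open Set

def interClosed {W : Type*} (𝒞 : Set (Set W)) : Prop := ∀ 𝒳 ⊆ 𝒞, ⋂₀ 𝒳 ∈ 𝒞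

def antiExchange {W : Type*} (𝒞 : Set (Set W)) : Prop :=
  ∀ C ∈ 𝒞, ∀ x y : W, x ∉ C → y ∉ C → x ≠ y →
    ∃ D ∈ 𝒞, C ⊆ D ∧ ((x ∈ D ∧ y ∉ D) ∨ (x ∉ D ∧ y ∈ D))

def hullOf {W : Type*} (𝒞 : Set (Set W)) (X : Set W) : Set W := ⋂₀ {C | C ∈ 𝒞 ∧ X ⊆ C}

def exOf {W : Type*} (𝒞 : Set (Set W)) (X : Set W) : Set W :=
  {x | x ∈ X ∧ x ∉ hullOf 𝒞 (X \ {x})}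

def univImage {W U : Type*} (f : W → U) (Y : Set W) : Set U := {u | f ⁻¹' {u} ⊆ Y}


noncomputable section RRGeo

namespace RRGeo

open Real Finset

def dotp (u x : ℝ × ℝ) : ℝ := u.1 * x.1 + u.2 * x.2

def uvec (d k : ℕ) : ℝ × ℝ := (Real.cos (2*π*k/d), Real.sin (2*π*k/d))

def eps (d n : ℕ) : ℝ := (1 - Real.cos (2*π/d)) / (2*n)

def rad (d n i : ℕ) : ℝ := 1 + i * eps d n

def pt (d n k i : ℕ) : ℝ × ℝ := rad d n i • uvec d k

variable {d n : ℕ}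

lemma gamma_lt_one (hd : 3 ≤ d) : Real.cos (2*π/d) < 1 := by
  have hd0 : (0:ℝ) < d := by exact_mod_cast (by omega : 0 < d)
  have hπ := Real.pi_pos
  have h1 : 0 < 2*π/d := by positivity
  have h2 : 2*π/d < 2*π := by
    rw [div_lt_iff₀ hd0]
    have h3 : (3:ℝ) ≤ d := by exact_mod_cast hd
    nlinarith [mul_lt_mul_of_pos_left (show (1:ℝ) < d by linarith) (show (0:ℝ) < 2*π by linarith)]
  refine lt_of_le_of_ne (Real.cos_le_one _) (fun h => ?_)
  have := (Real.cos_eq_one_iff_of_lt_of_lt (by linarith) h2).1 h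
  linarith

lemma eps_pos (hd : 3 ≤ d) (hn : 1 ≤ n) : 0 < eps d n := by
  have := gamma_lt_one (d := d) hd
  have hn0 : (0:ℝ) < n := by exact_mod_cast (by omega : 0 < n)
  have hγ : 0 < 1 - Real.cos (2*π/↑d) := by linarith
  unfold eps
  positivity

lemma rad_one_le (hd : 3 ≤ d) (hn : 1 ≤ n) (i : ℕ) : 1 ≤ rad d n i := by
  have := eps_pos hd hn
  unfold rad
  nlinarith [Nat.cast_nonneg (α := ℝ) i]

lemma rad_pos (hd : 3 ≤ d) (hn : 1 ≤ n) (i : ℕ) : 0 < rad d n i :=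
  lt_of_lt_of_le one_pos (rad_one_le hd hn i)

lemma rad_mono (hd : 3 ≤ d) (hn : 1 ≤ n) {i j : ℕ} (h : i ≤ j) : rad d n i ≤ rad d n j := by
  have := eps_pos hd hn
  have : (i:ℝ) ≤ j := by exact_mod_cast h
  unfold rad
  nlinarith [eps_pos (d := d) (n := n) hd hn]

lemma rad_strict (hd : 3 ≤ d) (hn : 1 ≤ n) {i j : ℕ} (h : i < j) : rad d n i < rad d n j := by
  have hε := eps_pos (d := d) (n := n) hd hn
  have : (i:ℝ) < j := by exact_mod_cast h
  unfold rad
  nlinarith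

lemma rad_le (hd : 3 ≤ d) (hn : 1 ≤ n) {j : ℕ} (hj : j ≤ n) :
    rad d n j ≤ (3 - Real.cos (2*π/d)) / 2 := by
  have hn0 : (0:ℝ) < n := by exact_mod_cast (by omega : 0 < n)
  have hε := eps_pos (d := d) (n := n) hd hn
  have hjn : (j:ℝ) ≤ n := by exact_mod_cast hj
  have hne : (n:ℝ) * eps d n = (1 - Real.cos (2*π/d)) / 2 := by
    unfold eps; field_simp
  have : (j:ℝ) * eps d n ≤ n * eps d n := by nlinarith
  unfold rad
  rw [hne] at this
  linarith

lemma cos_frac_le (hd : 3 ≤ d) {m : ℕ} (h1 : 1 ≤ m) (h2 : m < d) :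
    Real.cos (2*π*m/d) ≤ Real.cos (2*π/d) := by
  have hd0 : (0:ℝ) < d := by exact_mod_cast (by omega : 0 < d)
  have hπ := Real.pi_pos
  have hm1 : (1:ℝ) ≤ m := by exact_mod_cast h1
  have hmd : (m:ℝ) + 1 ≤ d := by exact_mod_cast h2
  have hx0 : 0 ≤ 2*π/d := by positivity
  have hxm : 2*π/d ≤ 2*π*m/d := by
    rw [div_le_div_iff_of_pos_right hd0]
    nlinarith
  by_cases hcase : 2*π*m/d ≤ π
  · exact Real.cos_le_cos_of_nonneg_of_le_pi hx0 hcase hxm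
  · push_neg at hcase
    rw [show Real.cos (2*π*m/d) = Real.cos (2*π - 2*π*m/d) from (Real.cos_two_pi_sub _).symm]
    have key : 2*π/d + 2*π*m/d ≤ 2*π := by
      rw [← add_div, div_le_iff₀ hd0]; nlinarith
    exact Real.cos_le_cos_of_nonneg_of_le_pi hx0 (by linarith) (by linarith)

lemma cos_angle_le (hd : 3 ≤ d) {k k' : ℕ} (hk : k < d) (hk' : k' < d) (hne : k ≠ k') :
    Real.cos (2*π*k/d - 2*π*k'/d) ≤ Real.cos (2*π/d) := by
  rcases lt_or_gt_of_ne hne with h | h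
  · rw [show (2*π*k/d - 2*π*k'/d) = -(2*π*k'/d - 2*π*k/d) by ring, Real.cos_neg]
    rw [show 2*π*(k':ℝ)/d - 2*π*k/d = 2*π*((k' - k : ℕ):ℝ)/d by
      push_cast [Nat.cast_sub (le_of_lt h)]; ring]
    exact cos_frac_le hd (by omega) (by omega)
  · rw [show 2*π*(k:ℝ)/d - 2*π*k'/d = 2*π*((k - k' : ℕ):ℝ)/d by
      push_cast [Nat.cast_sub (le_of_lt h)]; ring]
    exact cos_frac_le hd (by omega) (by omega)

lemma sum_uvec (hd : 3 ≤ d) : ∑ k ∈ Finset.range d, uvec d k = 0 := by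
  have hγ := gamma_lt_one (d := d) hd
  set z : ℂ := Complex.exp ((2*π/d : ℝ) * Complex.I) with hz
  have hz1 : z ≠ 1 := by
    intro h
    have h2 : z.re = 1 := by rw [h]; simp
    rw [hz, Complex.exp_ofReal_mul_I_re] at h2
    linarith
  have hdc : (d:ℂ) ≠ 0 := Nat.cast_ne_zero.mpr (by omega)
  have hzd : z ^ d = 1 := by
    rw [hz, ← Complex.exp_nat_mul]
    rw [show (d:ℂ) * ((2*π/d : ℝ) * Complex.I) = 2*π*Complex.I by
      push_cast; field_simp]
    exact Complex.exp_two_pi_mul_I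
  have hsum : ∑ k ∈ Finset.range d, z ^ k = 0 := by
    rw [geom_sum_eq hz1, hzd]; simp
  have hre : ∀ k, uvec d k = ((z^k).re, (z^k).im) := by
    intro k
    rw [hz, ← Complex.exp_nat_mul]
    rw [show (k:ℂ) * ((2*π/d : ℝ) * Complex.I) = ((2*π*k/d : ℝ) : ℂ) * Complex.I by
      push_cast; ring]
    exact Prod.ext (Complex.exp_ofReal_mul_I_re _).symm (Complex.exp_ofReal_mul_I_im _).symm
  have : ∑ k ∈ Finset.range d, uvec d k = ∑ k ∈ Finset.range d, ((z^k).re, (z^k).im) :=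
    Finset.sum_congr rfl (fun k _ => hre k)
  rw [this]
  refine Prod.ext ?_ ?_
  · rw [Prod.fst_sum]
    simpa using congrArg Complex.re hsum
  · rw [Prod.snd_sum]
    simpa using congrArg Complex.im hsum

lemma dot_pt_same (k i : ℕ) : dotp (uvec d k) (pt d n k i) = rad d n i := by
  simp only [dotp, pt, uvec, Prod.smul_fst, Prod.smul_snd, smul_eq_mul]
  linear_combination (rad d n i) * (Real.sin_sq_add_cos_sq (2*π*k/d))

lemma dot_pt_other (hd : 3 ≤ d) (hn : 1 ≤ n) {k k' j : ℕ} (hk : k < d) (hk' : k' < d)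
    (hne : k ≠ k') (hj : j ≤ n) : dotp (uvec d k) (pt d n k' j) < 1 := by
  have e : dotp (uvec d k) (pt d n k' j) = rad d n j * Real.cos (2*π*k/d - 2*π*k'/d) := by
    simp only [dotp, pt, uvec, Prod.smul_fst, Prod.smul_snd, smul_eq_mul]
    rw [Real.cos_sub]; ring
  rw [e]
  set c0 := Real.cos (2*π*k/d - 2*π*k'/d) with hc0
  have hle : c0 ≤ Real.cos (2*π/d) := cos_angle_le hd hk hk' hne
  have hγ1 : Real.cos (2*π/d) < 1 := gamma_lt_one hd
  have hr1 : 1 ≤ rad d n j := rad_one_le hd hn j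
  have hr2 : rad d n j ≤ (3 - Real.cos (2*π/d)) / 2 := rad_le hd hn hj
  rcases le_or_gt c0 0 with h | h
  · nlinarith
  · have hγ0 : 0 < Real.cos (2*π/d) := lt_of_lt_of_le h hle
    nlinarith [mul_le_mul hr2 hle h.le (by linarith)]

lemma convex_halfspace_dotp (u : ℝ × ℝ) (c : ℝ) : Convex ℝ {x : ℝ × ℝ | dotp u x ≤ c} := by
  intro x hx y hy a b ha hb hab
  simp only [mem_setOf_eq, dotp, Prod.fst_add, Prod.snd_add, Prod.smul_fst, Prod.smul_snd,
    smul_eq_mul] at *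
  have h1 := mul_le_mul_of_nonneg_left hx ha
  have h2 := mul_le_mul_of_nonneg_left hy hb
  have h3 : a*c + b*c = c := by rw [← add_mul, hab, one_mul]
  nlinarith [h1, h2, h3]

lemma zero_mem (hd : 3 ≤ d) (hn : 1 ≤ n) (j : ℕ → ℕ) {K : Set (ℝ × ℝ)} (hK : Convex ℝ K)
    (hjK : ∀ k < d, pt d n k (j k) ∈ K) : (0 : ℝ × ℝ) ∈ K := by
  set T : ℝ := ∑ k ∈ Finset.range d, (rad d n (j k))⁻¹ with hT
  have hTpos : 0 < T := by
    apply Finset.sum_pos (fun k _ => inv_pos.mpr (rad_pos hd hn (j k)))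
    exact ⟨0, Finset.mem_range.mpr (by omega)⟩
  have hsum1 : ∑ k ∈ Finset.range d, (rad d n (j k))⁻¹ / T = 1 := by
    rw [← Finset.sum_div, ← hT, div_self hTpos.ne']
  have key : (0 : ℝ × ℝ) = ∑ k ∈ Finset.range d, ((rad d n (j k))⁻¹ / T) • pt d n k (j k) := by
    have : ∀ k ∈ Finset.range d,
        ((rad d n (j k))⁻¹ / T) • pt d n k (j k) = T⁻¹ • uvec d k := by
      intro k _
      rw [pt, smul_smul]
      congr 1
      field_simp [(rad_pos hd hn (j k)).ne']
    rw [Finset.sum_congr rfl this, ← Finset.smul_sum, sum_uvec hd, smul_zero]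
  rw [key]
  exact hK.sum_mem (fun k _ => div_nonneg (inv_nonneg.mpr (rad_pos hd hn (j k)).le) hTpos.le) hsum1 (fun k hkm => hjK k (Finset.mem_range.mp hkm))

lemma lemA (hd : 3 ≤ d) (hn : 1 ≤ n) (j : ℕ → ℕ) {K : Set (ℝ × ℝ)} (hK : Convex ℝ K)
    (hjK : ∀ k' < d, pt d n k' (j k') ∈ K) {k i : ℕ} (hk : k < d) (hij : i ≤ j k) :
    pt d n k i ∈ K := by
  have h0 : (0 : ℝ × ℝ) ∈ K := zero_mem hd hn j hK hjK
  have hrj := rad_pos hd hn (j k)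
  have hri := rad_pos hd hn i
  set a : ℝ := rad d n i / rad d n (j k) with ha
  have ha0 : 0 ≤ a := by positivity
  have ha1 : a ≤ 1 := by
    rw [ha, div_le_one hrj]
    exact rad_mono hd hn hij
  have key : pt d n k i = a • pt d n k (j k) + (1 - a) • (0 : ℝ × ℝ) := by
    rw [smul_zero, add_zero, pt, pt, smul_smul, ha, div_mul_cancel₀ _ hrj.ne']
  rw [key]
  exact hK (hjK k hk) h0 ha0 (by linarith) (by ring)

lemma pt_inj (hd : 3 ≤ d) (hn : 1 ≤ n) {k k' i i' : ℕ} (hk : k < d) (hk' : k' < d)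
    (hi1 : 1 ≤ i) (hin : i ≤ n) (hi'1 : 1 ≤ i') (hi'n : i' ≤ n)
    (heq : pt d n k i = pt d n k' i') : k = k' ∧ i = i' := by
  have hε := eps_pos (d := d) (n := n) hd hn
  by_cases hkk : k = k'
  · subst hkk
    refine ⟨rfl, ?_⟩
    have h1 : dotp (uvec d k) (pt d n k i) = dotp (uvec d k) (pt d n k i') := by rw [heq]
    rw [dot_pt_same, dot_pt_same] at h1
    have : (i:ℝ) = i' := by
      unfold rad at h1
      have := mul_right_cancel₀ hε.ne' (by linarith : (i:ℝ) * eps d n = (i':ℝ) * eps d n)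
      exact this
    exact_mod_cast this
  · exfalso
    have h1 : dotp (uvec d k) (pt d n k i) = dotp (uvec d k) (pt d n k' i') := by rw [heq]
    rw [dot_pt_same] at h1
    have h2 := dot_pt_other hd hn hk hk' hkk hi'n
    have h3 := rad_one_le hd hn (d := d) (n := n) i
    rw [← h1] at h2
    linarith

end RRGeo

namespace RRComb

variable {W : Type*} [Finite W] {𝒞 : Set (Set W)}

lemma sep_step (hI : interClosed 𝒞) (hAE : antiExchange 𝒞) {A B : Set W}
    (hA : A ∈ 𝒞) (hB : B ∈ 𝒞) (hAB : A ⊂ B) : ∃ x ∈ B \ A, insert x A ∈ 𝒞 := by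
  classical
  set P : Set (Set W) := {E | E ∈ 𝒞 ∧ A ⊂ E ∧ E ⊆ B} with hP
  obtain ⟨E, hEP, hEmin⟩ := Set.exists_min_image P Set.ncard P.toFinite ⟨B, hB, hAB, subset_rfl⟩
  obtain ⟨x, hxE, hxA⟩ := exists_of_ssubset hEP.2.1
  refine ⟨x, ⟨hEP.2.2 hxE, hxA⟩, ?_⟩
  suffices hE : E = insert x A by rw [← hE]; exact hEP.1
  by_contra hne
  have hsub : insert x A ⊆ E := insert_subset hxE hEP.2.1.subset
  obtain ⟨y, hyE, hyx⟩ := exists_of_ssubset (ssubset_of_subset_of_ne hsub (Ne.symm hne))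
  have hyA : y ∉ A := fun h => hyx (mem_insert_of_mem _ h)
  have hyx' : y ≠ x := fun h => hyx (h ▸ mem_insert _ _)
  obtain ⟨D, hD, hAD, hsep⟩ := hAE A hA x y hxA hyA (Ne.symm hyx')
  have hED : E ∩ D ∈ 𝒞 := by
    have h1 : ({E, D} : Set (Set W)) ⊆ 𝒞 := by
      intro T hT
      rcases hT with rfl | rfl
      · exact hEP.1
      · exact hD
    have := hI {E, D} h1
    rwa [Set.sInter_pair] at this
  rcases hsep with ⟨hxD, hyD⟩ | ⟨hxD, hyD⟩
  · have hmem : E ∩ D ∈ P := by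
      refine ⟨hED, ⟨subset_inter hEP.2.1.subset hAD, fun hsub' => hxA (hsub' ⟨hxE, hxD⟩)⟩,
        inter_subset_left.trans hEP.2.2⟩
    have hlt : (E ∩ D).ncard < E.ncard :=
      Set.ncard_lt_ncard ⟨inter_subset_left, fun hsub' => hyD (hsub' hyE).2⟩ E.toFinite
    have := hEmin _ hmem
    omega
  · have hmem : E ∩ D ∈ P := by
      refine ⟨hED, ⟨subset_inter hEP.2.1.subset hAD, fun hsub' => hyA (hsub' ⟨hyE, hyD⟩)⟩,
        inter_subset_left.trans hEP.2.2⟩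
    have hlt : (E ∩ D).ncard < E.ncard :=
      Set.ncard_lt_ncard ⟨inter_subset_left, fun hsub' => hxD (hsub' hxE).2⟩ E.toFinite
    have := hEmin _ hmem
    omega

lemma chain_seg (hI : interClosed 𝒞) (hAE : antiExchange 𝒞) :
    ∀ (m : ℕ) (A B : Set W), A ∈ 𝒞 → B ∈ 𝒞 → A ⊆ B → (B \ A).ncard = m →
    ∃ ρ : W → ℕ, Set.InjOn ρ (B \ A) ∧ (∀ w ∈ B \ A, A.ncard < ρ w ∧ ρ w ≤ A.ncard + m) ∧
      (∀ i : ℕ, A ∪ {w ∈ B \ A | ρ w ≤ i} ∈ 𝒞) := by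
  intro m
  induction m with
  | zero =>
    intro A B hA hB hAB hcard
    have hBA : B \ A = ∅ := (Set.ncard_eq_zero (B \ A).toFinite).mp hcard
    refine ⟨fun _ => 0, ?_, ?_, ?_⟩
    · rw [hBA]; exact Set.injOn_empty _
    · rw [hBA]; intro w hw; exact absurd hw (notMem_empty w)
    · intro i
      have : {w ∈ B \ A | (fun _ => 0) w ≤ i} = ∅ ∨ {w ∈ B \ A | (fun _ => 0) w ≤ i} = ∅ ∪ ∅ := by
        left; rw [hBA]; simp
      rcases this with h | h <;> simp [h, hBA, hA]
  | succ m ih =>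
    intro A B hA hB hAB hcard
    have hne : (B \ A).Nonempty := by
      rw [Set.nonempty_iff_ne_empty]
      intro h
      rw [h] at hcard
      simp at hcard
    have hABs : A ⊂ B := by
      refine ⟨hAB, fun h => ?_⟩
      obtain ⟨x, hx⟩ := hne
      exact hx.2 (h hx.1)
    obtain ⟨x, hxBA, hA'⟩ := sep_step hI hAE hA hB hABs
    have hxA : x ∉ A := hxBA.2
    have hA'B : insert x A ⊆ B := insert_subset hxBA.1 hAB
    have hdiff : B \ insert x A = (B \ A) \ {x} := by
      ext w; simp [mem_diff, mem_insert_iff]; tauto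
    have hcard' : (B \ insert x A).ncard = m := by
      rw [hdiff, Set.ncard_diff_singleton_of_mem hxBA, hcard]
      omega
    have hcardA' : (insert x A).ncard = A.ncard + 1 :=
      Set.ncard_insert_of_notMem hxA A.toFinite
    obtain ⟨ρ', h1, h2, h3⟩ := ih (insert x A) B hA' hB hA'B hcard'
    classical
    refine ⟨fun w => if w = x then A.ncard + 1 else ρ' w, ?_, ?_, ?_⟩
    · intro w hw w' hw' heq
      by_cases hwx : w = x <;> by_cases hw'x : w' = x
      · rw [hwx, hw'x]
      · exfalso
        simp only [if_pos hwx, if_neg hw'x] at heq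
        have hw'm : w' ∈ B \ insert x A := by rw [hdiff]; exact ⟨hw', hw'x⟩
        have := (h2 w' hw'm).1
        rw [hcardA'] at this
        omega
      · exfalso
        simp only [if_pos hw'x, if_neg hwx] at heq
        have hwm : w ∈ B \ insert x A := by rw [hdiff]; exact ⟨hw, hwx⟩
        have := (h2 w hwm).1
        rw [hcardA'] at this
        omega
      · simp only [if_neg hwx, if_neg hw'x] at heq
        exact h1 (by rw [hdiff]; exact ⟨hw, hwx⟩) (by rw [hdiff]; exact ⟨hw', hw'x⟩) heq
    · intro w hw
      by_cases hwx : w = x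
      · simp only [if_pos hwx]; omega
      · simp only [if_neg hwx]
        have hwm : w ∈ B \ insert x A := by rw [hdiff]; exact ⟨hw, hwx⟩
        have := h2 w hwm
        rw [hcardA'] at this
        omega
    · intro i
      by_cases hi : i ≤ A.ncard
      · have : A ∪ {w ∈ B \ A | (if w = x then A.ncard + 1 else ρ' w) ≤ i} = A := by
          apply Set.union_eq_self_of_subset_right
          intro w hw
          exfalso
          obtain ⟨hwBA, hwle⟩ := hw
          by_cases hwx : w = x
          · rw [if_pos hwx] at hwle; omega
          · rw [if_neg hwx] at hwle
            have hwm : w ∈ B \ insert x A := by rw [hdiff]; exact ⟨hwBA, hwx⟩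
            have := (h2 w hwm).1
            rw [hcardA'] at this
            omega
        rw [this]; exact hA
      · push_neg at hi
        have : A ∪ {w ∈ B \ A | (if w = x then A.ncard + 1 else ρ' w) ≤ i}
            = insert x A ∪ {w ∈ B \ insert x A | ρ' w ≤ i} := by
          ext w
          constructor
          · rintro (hw | ⟨hwBA, hwle⟩)
            · exact Or.inl (mem_insert_of_mem _ hw)
            · by_cases hwx : w = x
              · exact Or.inl (hwx ▸ mem_insert _ _)
              · rw [if_neg hwx] at hwle
                exact Or.inr ⟨by rw [hdiff]; exact ⟨hwBA, hwx⟩, hwle⟩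
          · rintro (hw | ⟨hwBA', hwle⟩)
            · rcases mem_insert_iff.mp hw with rfl | hwA
              · refine Or.inr ⟨hxBA, ?_⟩
                rw [if_pos rfl]
                omega
              · exact Or.inl hwA
            · rw [hdiff] at hwBA'
              refine Or.inr ⟨hwBA'.1, ?_⟩
              rw [if_neg (by simpa using hwBA'.2)]
              exact hwle
        rw [this]
        exact h3 i

lemma full_rank (hI : interClosed 𝒞) (hAE : antiExchange 𝒞) (hempty : (∅ : Set W) ∈ 𝒞)
    {D : Set W} (hD : D ∈ 𝒞) :
    ∃ ρ : W → ℕ, Function.Injective ρ ∧ (∀ w, 1 ≤ ρ w ∧ ρ w ≤ Nat.card W) ∧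
      (∀ i, {w | ρ w ≤ i} ∈ 𝒞) ∧ {w | ρ w ≤ D.ncard} = D := by
  classical
  have huniv : (univ : Set W) ∈ 𝒞 := by
    have := hI ∅ (empty_subset _)
    simpa using this
  have hDn : D.ncard ≤ Nat.card W := by
    rw [← Set.ncard_univ]
    exact Set.ncard_le_ncard (subset_univ D) finite_univ
  obtain ⟨ρ₁, h11, h12, h13⟩ := chain_seg hI hAE D.ncard ∅ D hempty hD (empty_subset D)
    (by rw [Set.diff_empty])
  obtain ⟨ρ₂, h21, h22, h23⟩ := chain_seg hI hAE (univ \ D).ncard D univ hD huniv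
    (subset_univ D) rfl
  have huc : (univ : Set W).ncard = Nat.card W := Set.ncard_univ W
  have hDn' : D.ncard ≤ (univ : Set W).ncard := Set.ncard_le_ncard (subset_univ D) finite_univ
  have hcardsum : D.ncard + (univ \ D).ncard = Nat.card W := by
    rw [Set.ncard_diff (subset_univ D) D.toFinite]
    omega
  simp only [Set.ncard_empty, Set.diff_empty, Set.empty_union, zero_add] at h11 h12 h13
  refine ⟨fun w => if w ∈ D then ρ₁ w else ρ₂ w, ?_, ?_, ?_, ?_⟩
  · intro w w' heq
    by_cases hw : w ∈ D <;> by_cases hw' : w' ∈ D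
    · simp only [if_pos hw, if_pos hw'] at heq
      exact h11 hw hw' heq
    · exfalso
      simp only [if_pos hw, if_neg hw'] at heq
      have b1 := (h12 w hw).2
      have b2 := (h22 w' ⟨mem_univ w', hw'⟩).1
      omega
    · exfalso
      simp only [if_neg hw, if_pos hw'] at heq
      have b1 := (h12 w' hw').2
      have b2 := (h22 w ⟨mem_univ w, hw⟩).1
      omega
    · simp only [if_neg hw, if_neg hw'] at heq
      exact h21 ⟨mem_univ w, hw⟩ ⟨mem_univ w', hw'⟩ heq
  · intro w
    by_cases hw : w ∈ D
    · simp only [if_pos hw]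
      have := h12 w hw
      omega
    · simp only [if_neg hw]
      have := h22 w ⟨mem_univ w, hw⟩
      omega
  · intro i
    by_cases hi : i ≤ D.ncard
    · have : {w | (if w ∈ D then ρ₁ w else ρ₂ w) ≤ i} = {w ∈ D | ρ₁ w ≤ i} := by
        ext w
        by_cases hw : w ∈ D
        · simp only [mem_setOf_eq, if_pos hw]
          exact ⟨fun h => ⟨hw, h⟩, fun h => h.2⟩
        · simp only [mem_setOf_eq, if_neg hw]
          have h2b := (h22 w ⟨mem_univ w, hw⟩).1
          exact ⟨fun h => absurd h (by omega), fun h => absurd h.1 hw⟩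
      rw [this]
      exact h13 i
    · push_neg at hi
      have : {w | (if w ∈ D then ρ₁ w else ρ₂ w) ≤ i}
          = D ∪ {w ∈ univ \ D | ρ₂ w ≤ i} := by
        ext w
        simp only [mem_setOf_eq, mem_union, mem_diff, mem_univ, true_and]
        by_cases hw : w ∈ D
        · simp only [if_pos hw]
          have := (h12 w hw).2
          constructor
          · intro _; exact Or.inl hw
          · intro _; omega
        · simp only [if_neg hw]
          constructor
          · intro h; exact Or.inr ⟨hw, h⟩
          · rintro (h | h)
            · exact absurd h hw
            · exact h.2
      rw [this]
      exact h23 i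
  · ext w
    simp only [mem_setOf_eq]
    by_cases hw : w ∈ D
    · simp only [if_pos hw]
      have := (h12 w hw).2
      constructor
      · intro _; exact hw
      · intro _; omega
    · simp only [if_neg hw]
      have := (h22 w ⟨mem_univ w, hw⟩).1
      constructor
      · intro h; omega
      · intro h; exact absurd h hw

end RRComb


theorem richter_rogers_strong_morphism {W : Type*} [Finite W] (𝒞 : Set (Set W))
    (hI : interClosed 𝒞) (hAE : antiExchange 𝒞) (hempty : (∅ : Set W) ∈ 𝒞) :
    ∃ (U : Set (ℝ × ℝ)), U.Finite ∧
      ∃ r : ↥U → W, Function.Surjective r ∧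
        (∀ C : Set ↥U, (∃ K : Set (ℝ × ℝ), Convex ℝ K ∧ C = Subtype.val ⁻¹' K) →
          univImage r C ∈ 𝒞) ∧
        (∀ D ∈ 𝒞, ∃ C : Set ↥U,
          (∃ K : Set (ℝ × ℝ), Convex ℝ K ∧ C = Subtype.val ⁻¹' K) ∧
          D = univImage r C) := by
  classical
  rcases isEmpty_or_nonempty W with hW | hW
  · refine ⟨∅, finite_empty, fun u => absurd u.2 (Set.notMem_empty _),
      fun w => isEmptyElim w, ?_, ?_⟩
    · intro C _
      have h0 : univImage (fun u : ↥(∅ : Set (ℝ × ℝ)) =>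
          (absurd u.2 (Set.notMem_empty _) : W)) C = ∅ := by
        ext w; exact isEmptyElim w
      rw [h0]; exact hempty
    · intro D hD
      refine ⟨∅, ⟨∅, convex_empty, by simp⟩, ?_⟩
      ext w; exact isEmptyElim w
  · haveI := Fintype.ofFinite W
    set n := Nat.card W with hn
    have hn1 : 1 ≤ n := Nat.card_pos
    obtain ⟨m, ⟨eqv⟩⟩ := Finite.exists_equiv_fin ↥𝒞
    set d := m + 3 with hd
    have hd3 : 3 ≤ d := by omega
    set Dk : Fin d → Set W := fun k =>
      if h : (k : ℕ) < m then ((eqv.symm ⟨k, h⟩ : ↥𝒞) : Set W) else ∅ with hDk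
    have hDk𝒞 : ∀ k, Dk k ∈ 𝒞 := by
      intro k
      by_cases h : (k : ℕ) < m
      · simp only [hDk, dif_pos h]; exact (eqv.symm ⟨k, h⟩).2
      · simp only [hDk, dif_neg h]; exact hempty
    have hDkSurj : ∀ D ∈ 𝒞, ∃ k : Fin d, Dk k = D := by
      intro D hD
      have hlt : ((eqv ⟨D, hD⟩ : Fin m) : ℕ) < m := (eqv ⟨D, hD⟩).isLt
      refine ⟨⟨(eqv ⟨D, hD⟩ : Fin m), by omega⟩, ?_⟩
      simp only [hDk, dif_pos hlt, Fin.eta, Equiv.symm_apply_apply]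
    choose ρ hρinj hρbd hρlev hρD using
      fun k : Fin d => RRComb.full_rank hI hAE hempty (hDk𝒞 k)
    set P : Fin d → W → ℝ × ℝ := fun k w => RRGeo.pt d n k (ρ k w) with hP
    set f : Fin d × W → ℝ × ℝ := fun kw => P kw.1 kw.2 with hf
    refine ⟨Set.range f, Set.finite_range f, ?_⟩
    have hPinj : ∀ (k k' : Fin d) (w w' : W), P k w = P k' w' → w = w' := by
      intro k k' w w' h
      simp only [hP] at h
      obtain ⟨hk, hi⟩ := RRGeo.pt_inj hd3 hn1 k.isLt k'.isLt (hρbd k w).1 (hρbd k w).2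
        (hρbd k' w').1 (hρbd k' w').2 h
      have hkk : k = k' := Fin.ext hk
      subst hkk
      exact hρinj k hi
    have hrex : ∃ r : ↥(Set.range f) → W, ∀ (x : ↥(Set.range f)) (k : Fin d) (w : W),
        (x : ℝ × ℝ) = P k w → r x = w := by
      refine ⟨fun x => (Classical.choose (Set.mem_range.mp x.2)).2, ?_⟩
      intro x k w hx
      have hs := Classical.choose_spec (Set.mem_range.mp x.2)
      exact hPinj _ _ _ _ (hs.trans hx)
    obtain ⟨r, hr⟩ := hrex
    have hmem : ∀ (k : Fin d) (w : W), P k w ∈ Set.range f := fun k w => ⟨(k, w), rfl⟩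
    have hfib : ∀ (w : W) (K : Set (ℝ × ℝ)),
        (r ⁻¹' {w} ⊆ Subtype.val ⁻¹' K) ↔ (∀ k : Fin d, P k w ∈ K) := by
      intro w K
      constructor
      · intro h k
        have hx : r ⟨P k w, hmem k w⟩ = w := hr _ k w rfl
        exact h (show r ⟨P k w, hmem k w⟩ ∈ {w} from by rw [hx]; exact Set.mem_singleton _)
      · intro h x hx
        obtain ⟨c, hc⟩ := Set.mem_range.mp x.2
        have hw : r x = w := hx
        have hrc : r x = c.2 := hr x c.1 c.2 hc.symm
        have hcw : c.2 = w := hrc.symm.trans hw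
        show (x : ℝ × ℝ) ∈ K
        rw [show (x : ℝ × ℝ) = P c.1 c.2 from hc.symm, hcw]
        exact h c.1
    refine ⟨r, ?_, ?_, ?_⟩
    · intro w
      exact ⟨⟨P ⟨0, by omega⟩ w, hmem _ w⟩, hr _ _ w rfl⟩
    · rintro C ⟨K, hK, rfl⟩
      have hSdef : univImage r (Subtype.val ⁻¹' K) = {w | ∀ k : Fin d, P k w ∈ K} := by
        ext w
        simp only [univImage, Set.mem_setOf_eq]
        exact hfib w K
      rw [hSdef]
      rcases Set.eq_empty_or_nonempty {w | ∀ k : Fin d, P k w ∈ K} with hS | ⟨v0, hv0⟩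
      · rw [hS]; exact hempty
      · set S := {w | ∀ k : Fin d, P k w ∈ K} with hSset
        have hmax : ∀ k : Fin d, ∃ v, v ∈ S ∧ ∀ v' ∈ S, ρ k v' ≤ ρ k v := by
          intro k
          obtain ⟨v, hvS, hv⟩ := Set.exists_max_image S (ρ k) S.toFinite ⟨v0, hv0⟩
          exact ⟨v, hvS, hv⟩
        choose vk hvkS hvkmax using hmax
        have hSeq : S = ⋂₀ {T | ∃ k : Fin d, T = {w | ρ k w ≤ ρ k (vk k)}} := by
          ext w
          simp only [Set.mem_sInter, Set.mem_setOf_eq]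
          constructor
          · rintro hw T ⟨k, rfl⟩
            exact hvkmax k w hw
          · intro hw
            show ∀ k : Fin d, P k w ∈ K
            intro k
            have hle : ρ k w ≤ ρ k (vk k) := hw _ ⟨k, rfl⟩
            have hSmem : ∀ k'' : Fin d, P k'' (vk k) ∈ K := hvkS k
            have hjK : ∀ k' < d, RRGeo.pt d n k'
                ((fun k'' => if h : k'' < d then ρ ⟨k'', h⟩ (vk k) else 0) k') ∈ K := by
              intro k' hk'
              simp only [dif_pos hk']
              exact hSmem ⟨k', hk'⟩
            have hjk : (fun k'' => if h : k'' < d then ρ ⟨k'', h⟩ (vk k) else 0) (k : ℕ)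
                = ρ k (vk k) := by
              simp only [dif_pos k.isLt, Fin.eta]
            have hptK := RRGeo.lemA hd3 hn1 _ hK hjK k.isLt
              (le_trans hle (le_of_eq hjk.symm))
            simp only [hP]
            exact hptK
        rw [hSeq]
        apply hI
        rintro T ⟨k, rfl⟩
        exact hρlev k _
    · intro D hD
      obtain ⟨k₀, hk₀⟩ := hDkSurj D hD
      set G : Set (ℝ × ℝ) := ⋃ v ∈ D, Set.range (fun k : Fin d => P k v) with hG
      refine ⟨Subtype.val ⁻¹' (convexHull ℝ G), ⟨convexHull ℝ G, convex_convexHull ℝ G, rfl⟩, ?_⟩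
      ext w
      have hiff := hfib w (convexHull ℝ G)
      simp only [univImage, Set.mem_setOf_eq]
      rw [hiff]
      constructor
      · intro hwD k
        exact subset_convexHull ℝ G (Set.mem_biUnion hwD ⟨k, rfl⟩)
      · intro hall
        rw [← hk₀, ← hρD k₀]
        simp only [Set.mem_setOf_eq]
        by_contra hgt
        push_neg at hgt
        have hGH : G ⊆ {x | RRGeo.dotp (RRGeo.uvec d k₀) x ≤ RRGeo.rad d n (Dk k₀).ncard} := by
          rintro q hq
          simp only [hG, Set.mem_iUnion] at hq
          obtain ⟨v, hvD, k, rfl⟩ := hq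
          simp only [Set.mem_setOf_eq, hP]
          by_cases hkk : k = k₀
          · subst hkk
            rw [RRGeo.dot_pt_same]
            apply RRGeo.rad_mono hd3 hn1
            have hv' : v ∈ {w | ρ k w ≤ (Dk k).ncard} := by rw [hρD k, hk₀]; exact hvD
            exact hv'
          · have hne2 : (k₀ : ℕ) ≠ (k : ℕ) := fun h => hkk (Fin.ext h.symm)
            have hlt1 := RRGeo.dot_pt_other hd3 hn1 k₀.isLt k.isLt hne2 (hρbd k v).2
            have hc1 : 1 ≤ RRGeo.rad d n (Dk k₀).ncard := RRGeo.rad_one_le hd3 hn1 _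
            linarith
        have hKH := convexHull_min hGH (RRGeo.convex_halfspace_dotp _ _)
        have hin := hKH (hall k₀)
        simp only [Set.mem_setOf_eq, hP] at hin
        rw [RRGeo.dot_pt_same] at hin
        have hstr := RRGeo.rad_strict hd3 hn1 hgt
        linarith
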